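/- arXiv:1503.04526 — 2 statements merged into one kernel-verified Lean document; each statement's English description precedes it below -/
import Mathlib

section
/- For a finite simple connected graph G, h(T(G)) = |E(G)| if and only if G has no internal vertex, i.e., no vertex of degree at least 2. -/
/-- The primitive hole number of a simple graph: the number of triangles
(3-cliques) in the graph. -/
noncomputable def SimpleGraph.holeNumber {V : Type*} (G : SimpleGraph V) : ℕ :=
  {s : Finset V | G.IsNClique 3 s}.ncard

/-- The primitive degree of a vertex: the number of triangles (3-cliques)
of the graph containing that vertex. -/
noncomputable def SimpleGraph.primDegree {V : Type*} (G : SimpleGraph V) (v : V) : ℕ :=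
  {s : Finset V | G.IsNClique 3 s ∧ v ∈ s}.ncard

/-- The total graph of a simple graph `G`: vertices are the vertices and edges of `G`,
two of them adjacent iff the corresponding elements of `G` are adjacent or incident. -/
def SimpleGraph.totalGraph {V : Type*} (G : SimpleGraph V) :
    SimpleGraph (V ⊕ G.edgeSet) where
  Adj x y :=
    match x, y with
    | Sum.inl u, Sum.inl v => G.Adj u v
    | Sum.inl u, Sum.inr e => u ∈ (e : Sym2 V)
    | Sum.inr e, Sum.inl u => u ∈ (e : Sym2 V)
    | Sum.inr e, Sum.inr f => e ≠ f ∧ ∃ v, v ∈ (e : Sym2 V) ∧ v ∈ (f : Sym2 V)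
  symm := by
    constructor
    rintro (u | e) (v | f) h
    · exact G.adj_symm h
    · exact h
    · exact h
    · exact ⟨h.1.symm, h.2.imp fun v hv => ⟨hv.2, hv.1⟩⟩
  loopless := by
    constructor
    rintro (u | e) h
    · exact G.irrefl h
    · exact h.1 rfl

namespace TotalGraphAux

open Sum

variable {V : Type*}

/-- The two-element finset of a `Sym2`. -/
noncomputable def pairFinset (e : Sym2 V) : Finset V :=
  letI := Classical.decEq V
  Sym2.lift ⟨fun u v => {u, v}, fun u v => Finset.pair_comm u v⟩ e

lemma mem_pairFinset {e : Sym2 V} {x : V} : x ∈ pairFinset e ↔ x ∈ e := by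
  classical
  induction e using Sym2.ind with
  | _ u v => simp [pairFinset, Sym2.mem_iff]

variable (G : SimpleGraph V)

/-- The canonical triangle of the total graph attached to an edge. -/
noncomputable def triOf (e : G.edgeSet) : Finset (V ⊕ G.edgeSet) :=
  letI := Classical.decEq (V ⊕ G.edgeSet)
  insert (inr e) ((pairFinset (e : Sym2 V)).image inl)

lemma mem_triOf {e : G.edgeSet} {x : V ⊕ G.edgeSet} :
    x ∈ triOf G e ↔ x = inr e ∨ ∃ u ∈ (e : Sym2 V), x = inl u := by
  classical
  simp [triOf, mem_pairFinset, eq_comm]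

lemma inr_mem_triOf {e f : G.edgeSet} : (inr f : V ⊕ G.edgeSet) ∈ triOf G e ↔ f = e := by
  simp [mem_triOf]

lemma isNClique_triOf (e : G.edgeSet) : G.totalGraph.IsNClique 3 (triOf G e) := by
  classical
  obtain ⟨e, he⟩ := e
  induction e using Sym2.ind with
  | _ u v =>
    have hadj : G.Adj u v := he
    have hne : u ≠ v := hadj.ne
    constructor
    · intro x hx y hy hxy
      rw [Finset.mem_coe, mem_triOf] at hx hy
      simp only [Sym2.mem_iff] at hx hy
      rcases hx with rfl | ⟨a, ha, rfl⟩ <;> rcases hy with rfl | ⟨b, hb, rfl⟩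
      · exact absurd rfl hxy
      · rcases hb with rfl | rfl <;>
          simp [SimpleGraph.totalGraph, Sym2.mem_iff]
      · rcases ha with rfl | rfl <;>
          simp [SimpleGraph.totalGraph, Sym2.mem_iff]
      · have : a ≠ b := fun h => hxy (by rw [h])
        rcases ha with rfl | rfl <;> rcases hb with rfl | rfl
        · exact absurd rfl this
        · exact hadj
        · exact hadj.symm
        · exact absurd rfl this
    · have h3 : triOf G ⟨s(u, v), he⟩ =
          {inr ⟨s(u, v), he⟩, inl u, inl v} := by
        ext x
        simp only [mem_triOf, Sym2.mem_iff, Finset.mem_insert, Finset.mem_singleton]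
        constructor
        · rintro (rfl | ⟨w, (rfl | rfl), rfl⟩) <;> simp
        · rintro (rfl | rfl | rfl)
          · exact Or.inl rfl
          · exact Or.inr ⟨u, Or.inl rfl, rfl⟩
          · exact Or.inr ⟨v, Or.inr rfl, rfl⟩
      rw [h3, Finset.card_insert_of_notMem (by simp),
        Finset.card_insert_of_notMem (by simp [hne]), Finset.card_singleton]

lemma triOf_injective : Function.Injective (triOf G) := by
  intro e f h
  have : (inr e : V ⊕ G.edgeSet) ∈ triOf G f := by
    rw [← h, inr_mem_triOf]
  rwa [inr_mem_triOf] at this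

lemma triangle_eq_triOf (hdeg : ∀ u v w : V, G.Adj u v → G.Adj u w → v = w)
    {s : Finset (V ⊕ G.edgeSet)} (hs : G.totalGraph.IsNClique 3 s) :
    ∃ e, s = triOf G e := by
  classical
  have hedge : ∀ (e f : G.edgeSet) (x : V), x ∈ (e : Sym2 V) → x ∈ (f : Sym2 V) → e = f := by
    intro e f x hxe hxf
    have h1 : s(x, Sym2.Mem.other hxe) = (e : Sym2 V) := Sym2.other_spec hxe
    have h2 : s(x, Sym2.Mem.other hxf) = (f : Sym2 V) := Sym2.other_spec hxf
    have a1 : G.Adj x (Sym2.Mem.other hxe) := by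
      rw [← SimpleGraph.mem_edgeSet, h1]; exact e.2
    have a2 : G.Adj x (Sym2.Mem.other hxf) := by
      rw [← SimpleGraph.mem_edgeSet, h2]; exact f.2
    have h3 := hdeg x _ _ a1 a2
    apply Subtype.ext
    rw [← h1, ← h2, h3]
  obtain ⟨a, b, c, hab, hac, hbc, rfl⟩ := Finset.card_eq_three.mp hs.2
  have hcl := hs.1
  have Hab : G.totalGraph.Adj a b := hcl (by simp) (by simp) hab
  have Hac : G.totalGraph.Adj a c := hcl (by simp) (by simp) hac
  have Hbc : G.totalGraph.Adj b c := hcl (by simp) (by simp) hbc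
  -- helper to finish one-inr cases
  have finish : ∀ (u v : V) (e : G.edgeSet), u ≠ v → u ∈ (e : Sym2 V) → v ∈ (e : Sym2 V) →
      ∃ f, ({inl u, inl v, inr e} : Finset (V ⊕ G.edgeSet)) = triOf G f := by
    intro u v e huv hu hv
    refine ⟨e, ?_⟩
    have hev : (e : Sym2 V) = s(u, v) := (Sym2.mem_and_mem_iff huv).mp ⟨hu, hv⟩
    ext x
    simp only [mem_triOf, hev, Sym2.mem_iff, Finset.mem_insert, Finset.mem_singleton]
    constructor
    · rintro (rfl | rfl | rfl)
      · exact Or.inr ⟨u, Or.inl rfl, rfl⟩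
      · exact Or.inr ⟨v, Or.inr rfl, rfl⟩
      · exact Or.inl rfl
    · rintro (rfl | ⟨w, (rfl | rfl), rfl⟩) <;> simp
  -- no two inr's can be adjacent
  have noinr : ∀ (e f : G.edgeSet), G.totalGraph.Adj (inr e) (inr f) → False := by
    rintro e f ⟨hef, x, hx1, hx2⟩
    exact hef (hedge e f x hx1 hx2)
  rcases a with u | e <;> rcases b with v | f <;> rcases c with w | g
  · -- three inl's: triangle in G
    exact absurd (hdeg u v w Hab Hac) (by simpa using hbc)
  · have h1 : u ∈ (g : Sym2 V) := Hac
    have h2 : v ∈ (g : Sym2 V) := Hbc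
    exact finish u v g (by simpa using hab) h1 h2
  · obtain ⟨e', he'⟩ := finish u w f (by simpa using hac) Hab Hbc
    refine ⟨e', ?_⟩
    rw [← he']
    ext x
    simp only [Finset.mem_insert, Finset.mem_singleton]
    tauto
  · exact absurd Hbc (noinr f g)
  · obtain ⟨e', he'⟩ := finish v w e (by simpa using hbc) Hab.symm Hac.symm
    refine ⟨e', ?_⟩
    rw [← he']
    ext x
    simp only [Finset.mem_insert, Finset.mem_singleton]
    tauto
  · exact absurd Hac (noinr e g)
  · exact absurd Hab (noinr e f)
  · exact absurd Hab (noinr e f)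

end TotalGraphAux

open TotalGraphAux in
/-- For a finite simple connected graph `G`, `h(T(G)) = |E(G)|` iff `G` has no
internal vertex (a vertex of degree at least `2`). -/
theorem holeNumber_totalGraph_eq_iff {V : Type*} [Fintype V]
    (G : SimpleGraph V) [DecidableRel G.Adj] (hconn : G.Connected) :
    G.totalGraph.holeNumber = G.edgeSet.ncard ↔ ¬ ∃ v : V, 2 ≤ G.degree v := by
  classical
  have hcard : (Set.range (triOf G)).ncard = G.edgeSet.ncard := by
    rw [← Nat.card_coe_set_eq, Nat.card_range_of_injective (triOf_injective G),
      Nat.card_coe_set_eq]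
  constructor
  · rintro h ⟨v, hv⟩
    obtain ⟨u, hu, w, hw, huw⟩ := Finset.one_lt_card.mp (hv : 1 < (G.neighborFinset v).card)
    have hvu : G.Adj v u := (SimpleGraph.mem_neighborFinset G v u).mp hu
    have hvw : G.Adj v w := (SimpleGraph.mem_neighborFinset G v w).mp hw
    set e1 : G.edgeSet := ⟨s(v, u), hvu⟩ with he1def
    set e2 : G.edgeSet := ⟨s(v, w), hvw⟩ with he2def
    have he12 : e1 ≠ e2 := fun hh => huw (Sym2.congr_right.mp (Subtype.ext_iff.mp hh))
    set t : Finset (V ⊕ G.edgeSet) := {Sum.inl v, Sum.inr e1, Sum.inr e2} with htdef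
    have hm1 : v ∈ (e1 : Sym2 V) := by rw [he1def]; exact Sym2.mem_mk_left v u
    have hm2 : v ∈ (e2 : Sym2 V) := by rw [he2def]; exact Sym2.mem_mk_left v w
    have ht : G.totalGraph.IsNClique 3 t := by
      constructor
      · intro x hx y hy hxy
        rw [Finset.mem_coe, htdef] at hx hy
        simp only [Finset.mem_insert, Finset.mem_singleton] at hx hy
        have a1 : G.totalGraph.Adj (Sum.inl v) (Sum.inr e1) := hm1
        have a2 : G.totalGraph.Adj (Sum.inl v) (Sum.inr e2) := hm2
        have a3 : G.totalGraph.Adj (Sum.inr e1) (Sum.inr e2) := ⟨he12, v, hm1, hm2⟩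
        rcases hx with rfl | rfl | rfl <;> rcases hy with rfl | rfl | rfl <;>
          first
            | exact absurd rfl hxy
            | exact a1 | exact a2 | exact a3 | exact a1.symm | exact a2.symm | exact a3.symm
      · rw [htdef, Finset.card_insert_of_notMem (by simp),
          Finset.card_insert_of_notMem (by simp [he12]), Finset.card_singleton]
    have htn : t ∉ Set.range (triOf G) := by
      rintro ⟨e, he⟩
      have m1 : (Sum.inr e1 : V ⊕ G.edgeSet) ∈ triOf G e := by rw [he, htdef]; simp
      have m2 : (Sum.inr e2 : V ⊕ G.edgeSet) ∈ triOf G e := by rw [he, htdef]; simp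
      rw [inr_mem_triOf] at m1 m2
      exact he12 (m1.trans m2.symm)
    have hsub : insert t (Set.range (triOf G)) ⊆
        {s : Finset (V ⊕ G.edgeSet) | G.totalGraph.IsNClique 3 s} := by
      rintro x (rfl | ⟨e, rfl⟩)
      · exact ht
      · exact isNClique_triOf G e
    have hle := Set.ncard_le_ncard hsub (Set.toFinite _)
    rw [Set.ncard_insert_of_notMem htn (Set.toFinite _), hcard] at hle
    rw [SimpleGraph.holeNumber] at h
    omega
  · intro h
    have hdeg : ∀ u v w : V, G.Adj u v → G.Adj u w → v = w := by
      intro u v w h1 h2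
      by_contra hne
      refine h ⟨u, ?_⟩
      have hsub : ({v, w} : Finset V) ⊆ G.neighborFinset u := by
        intro x hx
        simp only [Finset.mem_insert, Finset.mem_singleton] at hx
        rcases hx with rfl | rfl <;> rw [SimpleGraph.mem_neighborFinset] <;> assumption
      calc 2 = ({v, w} : Finset V).card := (Finset.card_pair hne).symm
        _ ≤ _ := Finset.card_le_card hsub
    have heq : {s : Finset (V ⊕ G.edgeSet) | G.totalGraph.IsNClique 3 s} =
        Set.range (triOf G) := by
      ext s
      constructor
      · intro hs
        obtain ⟨e, rfl⟩ := triangle_eq_triOf G hdeg hs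
        exact ⟨e, rfl⟩
      · rintro ⟨e, rfl⟩
        exact isNClique_triOf G e
    rw [SimpleGraph.holeNumber, heq, hcard]
end

section
/- For a finite simple connected graph G, h(T(G)) > |E(G)| if and only if G has an internal vertex, i.e., a vertex of degree at least 2. -/
section Aux

variable {V : Type*} {G : SimpleGraph V}

@[simp] lemma totalGraph_adj_inl_inl (u v : V) :
    G.totalGraph.Adj (Sum.inl u) (Sum.inl v) ↔ G.Adj u v := Iff.rfl

@[simp] lemma totalGraph_adj_inl_inr (u : V) (e : G.edgeSet) :
    G.totalGraph.Adj (Sum.inl u) (Sum.inr e) ↔ u ∈ (e : Sym2 V) := Iff.rfl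

@[simp] lemma totalGraph_adj_inr_inl (u : V) (e : G.edgeSet) :
    G.totalGraph.Adj (Sum.inr e) (Sum.inl u) ↔ u ∈ (e : Sym2 V) := Iff.rfl

@[simp] lemma totalGraph_adj_inr_inr (e f : G.edgeSet) :
    G.totalGraph.Adj (Sum.inr e) (Sum.inr f) ↔
      e ≠ f ∧ ∃ v, v ∈ (e : Sym2 V) ∧ v ∈ (f : Sym2 V) := Iff.rfl

/-- The triangle of the total graph associated to an edge of `G`. -/
def triOf [DecidableEq V] (G : SimpleGraph V) (e : G.edgeSet) :
    Finset (V ⊕ G.edgeSet) :=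
  Sym2.lift ⟨fun u v => ({Sum.inl u, Sum.inl v, Sum.inr e} : Finset (V ⊕ G.edgeSet)),
    fun u v => by simp [Finset.insert_comm]⟩ (e : Sym2 V)

lemma mem_triOf_iff [DecidableEq V] {e : G.edgeSet} {x : V ⊕ G.edgeSet} :
    x ∈ triOf G e ↔ x = Sum.inr e ∨ ∃ w ∈ (e : Sym2 V), x = Sum.inl w := by
  obtain ⟨e, he⟩ := e
  induction e using Sym2.ind with
  | _ u v =>
    simp only [triOf, Sym2.lift_mk, Finset.mem_insert, Finset.mem_singleton, Sym2.mem_iff]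
    constructor
    · rintro (rfl | rfl | rfl)
      · exact Or.inr ⟨u, Or.inl rfl, rfl⟩
      · exact Or.inr ⟨v, Or.inr rfl, rfl⟩
      · exact Or.inl rfl
    · rintro (rfl | ⟨w, (rfl | rfl), rfl⟩)
      · exact Or.inr (Or.inr rfl)
      · exact Or.inl rfl
      · exact Or.inr (Or.inl rfl)

lemma inr_mem_triOf_iff [DecidableEq V] {e f : G.edgeSet} :
    Sum.inr f ∈ triOf G e ↔ f = e := by
  simp [mem_triOf_iff]

lemma triOf_injective [DecidableEq V] : Function.Injective (triOf G) := by
  intro e f h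
  have : Sum.inr e ∈ triOf G f := by rw [← h, inr_mem_triOf_iff]
  exact inr_mem_triOf_iff.mp this

lemma triOf_eq_of [DecidableEq V] {e : G.edgeSet} {u v : V} (hne : u ≠ v)
    (hu : u ∈ (e : Sym2 V)) (hv : v ∈ (e : Sym2 V)) :
    triOf G e = {Sum.inl u, Sum.inl v, Sum.inr e} := by
  obtain ⟨e, he⟩ := e
  obtain rfl : e = s(u, v) := (Sym2.mem_and_mem_iff hne).mp ⟨hu, hv⟩
  rfl

lemma triOf_isNClique [DecidableEq V] (e : G.edgeSet) :
    G.totalGraph.IsNClique 3 (triOf G e) := by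
  obtain ⟨e, he⟩ := e
  induction e using Sym2.ind with
  | _ u v =>
    have hadj : G.Adj u v := G.mem_edgeSet.mp he
    have h1 : triOf G ⟨s(u, v), he⟩ =
        {Sum.inl u, Sum.inl v, Sum.inr ⟨s(u, v), he⟩} := rfl
    rw [h1, SimpleGraph.is3Clique_triple_iff]
    refine ⟨hadj, ?_, ?_⟩
    · exact Sym2.mem_mk_left u v
    · exact Sym2.mem_mk_right u v

lemma two_le_degree_of_adj [Fintype V] [DecidableRel G.Adj] {v a b : V}
    (h1 : G.Adj v a) (h2 : G.Adj v b) (hab : a ≠ b) : 2 ≤ G.degree v := by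
  have : 1 < (G.neighborFinset v).card := by
    rw [Finset.one_lt_card]
    exact ⟨a, by simpa using h1, b, by simpa using h2, hab⟩
  exact this

lemma two_le_degree_of_mem_mem [Fintype V] [DecidableRel G.Adj] {e f : G.edgeSet} {v : V}
    (hef : e ≠ f) (he : v ∈ (e : Sym2 V)) (hf : v ∈ (f : Sym2 V)) : 2 ≤ G.degree v := by
  have hea : (e : Sym2 V) = s(v, Sym2.Mem.other he) := (Sym2.other_spec he).symm
  have hfb : (f : Sym2 V) = s(v, Sym2.Mem.other hf) := (Sym2.other_spec hf).symm
  have hva : G.Adj v (Sym2.Mem.other he) := G.mem_edgeSet.mp (hea ▸ e.2)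
  have hvb : G.Adj v (Sym2.Mem.other hf) := G.mem_edgeSet.mp (hfb ▸ f.2)
  refine two_le_degree_of_adj hva hvb fun hab => hef (Subtype.ext ?_)
  rw [hea, hfb, hab]

lemma classify [DecidableEq V] [Fintype V] [DecidableRel G.Adj]
    (hdeg : ∀ v, G.degree v ≤ 1) {s : Finset (V ⊕ G.edgeSet)}
    (hs : G.totalGraph.IsNClique 3 s) : ∃ e, s = triOf G e := by
  rw [SimpleGraph.is3Clique_iff] at hs
  obtain ⟨a, b, c, hab, hac, hbc, rfl⟩ := hs
  rcases a with u | e <;> rcases b with v | f <;> rcases c with w | g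
  · -- three vertices
    rw [totalGraph_adj_inl_inl] at hab hac
    exact absurd ((two_le_degree_of_adj hab hac (by rintro rfl; exact (totalGraph_adj_inl_inl v v).mp hbc |>.ne rfl)).trans (hdeg u)) (by norm_num)
  · -- u v, edge g
    rw [totalGraph_adj_inl_inl] at hab
    rw [totalGraph_adj_inl_inr] at hac hbc
    refine ⟨g, ?_⟩
    rw [triOf_eq_of hab.ne hac hbc]
  · -- u w, edge f
    rw [totalGraph_adj_inl_inl] at hac
    rw [totalGraph_adj_inl_inr] at hab
    rw [totalGraph_adj_inr_inl] at hbc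
    refine ⟨f, ?_⟩
    rw [triOf_eq_of hac.ne hab hbc]
    ext x
    simp only [Finset.mem_insert, Finset.mem_singleton]
    tauto
  · -- u, edges f g
    rw [totalGraph_adj_inl_inr] at hab hac
    rw [totalGraph_adj_inr_inr] at hbc
    exact absurd ((two_le_degree_of_mem_mem hbc.1 hab hac).trans (hdeg u)) (by norm_num)
  · -- v w, edge e
    rw [totalGraph_adj_inl_inl] at hbc
    rw [totalGraph_adj_inr_inl] at hab hac
    refine ⟨e, ?_⟩
    rw [triOf_eq_of hbc.ne hab hac]
    ext x
    simp only [Finset.mem_insert, Finset.mem_singleton]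
    tauto
  · -- v, edges e g
    rw [totalGraph_adj_inr_inl] at hab
    rw [totalGraph_adj_inl_inr] at hbc
    rw [totalGraph_adj_inr_inr] at hac
    exact absurd ((two_le_degree_of_mem_mem hac.1 hab hbc).trans (hdeg v)) (by norm_num)
  · -- w, edges e f
    rw [totalGraph_adj_inr_inl] at hac hbc
    rw [totalGraph_adj_inr_inr] at hab
    exact absurd ((two_le_degree_of_mem_mem hab.1 hac hbc).trans (hdeg w)) (by norm_num)
  · -- edges e f g
    rw [totalGraph_adj_inr_inr] at hab hac hbc
    obtain ⟨x, hx1, hx2⟩ := hab.2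
    exact absurd ((two_le_degree_of_mem_mem hab.1 hx1 hx2).trans (hdeg x)) (by norm_num)

end Aux

/-- For a finite simple connected graph `G`, `h(T(G)) > |E(G)|` iff `G` has an
internal vertex (a vertex of degree at least `2`). -/
theorem holeNumber_totalGraph_gt_iff {V : Type*} [Fintype V]
    (G : SimpleGraph V) [DecidableRel G.Adj] (hconn : G.Connected) :
    G.edgeSet.ncard < G.totalGraph.holeNumber ↔ ∃ v : V, 2 ≤ G.degree v := by
  classical
  have hE : G.edgeSet.ncard = Nat.card G.edgeSet := (Nat.card_coe_set_eq _).symm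
  have hrange : (Set.range (triOf G)).ncard = G.edgeSet.ncard := by
    rw [← Set.image_univ, Set.ncard_image_of_injective _ triOf_injective,
      Set.ncard_univ, hE]
  constructor
  · intro h
    by_contra hno
    push_neg at hno
    have hdeg : ∀ v, G.degree v ≤ 1 := fun v => by have := hno v; omega
    have hS : {s : Finset (V ⊕ G.edgeSet) | G.totalGraph.IsNClique 3 s} =
        Set.range (triOf G) := by
      ext s
      constructor
      · intro hs
        obtain ⟨e, rfl⟩ := classify hdeg hs
        exact ⟨e, rfl⟩
      · rintro ⟨e, rfl⟩
        exact triOf_isNClique e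
    rw [SimpleGraph.holeNumber, hS, hrange] at h
    omega
  · rintro ⟨v, hv⟩
    have hv' : 1 < (G.neighborFinset v).card := hv
    rw [Finset.one_lt_card] at hv'
    obtain ⟨a, ha, b, hb, hab⟩ := hv'
    rw [SimpleGraph.mem_neighborFinset] at ha hb
    set e1 : G.edgeSet := ⟨s(v, a), G.mem_edgeSet.mpr ha⟩ with he1
    set e2 : G.edgeSet := ⟨s(v, b), G.mem_edgeSet.mpr hb⟩ with he2
    have he12 : e1 ≠ e2 := by
      intro h
      apply hab
      have := congrArg Subtype.val h
      simp only [he1, he2, Sym2.congr_right] at this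
      exact this
    set t0 : Finset (V ⊕ G.edgeSet) := {Sum.inl v, Sum.inr e1, Sum.inr e2} with ht0
    have ht0clique : G.totalGraph.IsNClique 3 t0 := by
      rw [ht0, SimpleGraph.is3Clique_triple_iff]
      refine ⟨?_, ?_, ?_⟩
      · exact Sym2.mem_mk_left v a
      · exact Sym2.mem_mk_left v b
      · exact ⟨he12, v, Sym2.mem_mk_left v a, Sym2.mem_mk_left v b⟩
    have ht0notmem : t0 ∉ Set.range (triOf G) := by
      rintro ⟨e, he⟩
      have h1 : Sum.inr e1 ∈ triOf G e := by rw [he, ht0]; simp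
      have h2 : Sum.inr e2 ∈ triOf G e := by rw [he, ht0]; simp
      rw [inr_mem_triOf_iff] at h1 h2
      exact he12 (h1.trans h2.symm)
    have hsub : insert t0 (Set.range (triOf G)) ⊆
        {s : Finset (V ⊕ G.edgeSet) | G.totalGraph.IsNClique 3 s} := by
      rintro s (rfl | ⟨e, rfl⟩)
      · exact ht0clique
      · exact triOf_isNClique e
    have hfin : {s : Finset (V ⊕ G.edgeSet) | G.totalGraph.IsNClique 3 s}.Finite :=
      Set.toFinite _
    have hle : (insert t0 (Set.range (triOf G))).ncard ≤ G.totalGraph.holeNumber :=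
      Set.ncard_le_ncard hsub hfin
    rw [Set.ncard_insert_of_notMem ht0notmem (Set.toFinite _), hrange] at hle
    omega
end
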